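/- Let ν : [0,∞) → ℝ be convex and strictly increasing, let r ≥ 0 and let m ≥ ν(0). Then inf_{λ > 0} ( ν*(λr) + m ) / λ = r · sup{ s ≥ 0 : ν(s) ≤ m }, where the infimum is taken in ℝ ∪ {+∞}. -/

import Mathlib

open Set

/-- The Legendre transform `ν*(q) = sup_{s ≥ 0} (q·s − ν(s))`, with values in
`ℝ ∪ {+∞}` (modelled by `EReal`). -/
noncomputable def legendre (ν : ℝ → ℝ) (q : ℝ) : EReal :=
  ⨆ s : Ici (0 : ℝ), ((q * (s : ℝ) - ν s : ℝ) : EReal)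

lemma ereal_le_coe_of_forall_eps (x : EReal) (c : ℝ)
    (h : ∀ ε : ℝ, 0 < ε → x ≤ ((c + ε : ℝ) : EReal)) : x ≤ (c : EReal) := by
  by_contra hc
  push_neg at hc
  obtain ⟨q, hq1, hq2⟩ := EReal.exists_rat_btwn_of_lt hc
  have hε : (0 : ℝ) < (q : ℝ) - c := by
    have := EReal.coe_lt_coe_iff.1 hq1
    linarith
  have := h _ hε
  rw [show c + ((q : ℝ) - c) = (q : ℝ) by ring] at this
  exact absurd (this.trans_lt hq2) (lt_irrefl _)

lemma coe_le_ereal_of_forall_eps (c : ℝ) (x : EReal)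
    (h : ∀ ε : ℝ, 0 < ε → ((c - ε : ℝ) : EReal) ≤ x) : (c : EReal) ≤ x := by
  by_contra hc
  push_neg at hc
  obtain ⟨q, hq1, hq2⟩ := EReal.exists_rat_btwn_of_lt hc
  have hε : (0 : ℝ) < c - (q : ℝ) := by
    have := EReal.coe_lt_coe_iff.1 hq2
    linarith
  have := h _ hε
  rw [show c - (c - (q : ℝ)) = (q : ℝ) by ring] at this
  exact absurd (hq1.trans_le this) (lt_irrefl _)

/-- If `ν : [0,∞) → ℝ` is convex and strictly increasing, `r ≥ 0`
and `m ≥ ν(0)`, then `inf_{λ > 0} (ν*(λ r) + m)/λ = r · sup{s ≥ 0 : ν(s) ≤ m}`,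
the infimum being taken in `ℝ ∪ {+∞}`. -/
theorem legendre_inf_identity (ν : ℝ → ℝ)
    (hconv : ConvexOn ℝ (Ici (0 : ℝ)) ν) (hmono : StrictMonoOn ν (Ici (0 : ℝ)))
    (r : ℝ) (hr : 0 ≤ r) (m : ℝ) (hm : ν 0 ≤ m) :
    (⨅ (l : ℝ) (_ : 0 < l), (legendre ν (l * r) + (m : EReal)) / ((l : ℝ) : EReal))
      = ((r * sSup {s : ℝ | 0 ≤ s ∧ ν s ≤ m} : ℝ) : EReal) := by
  set A : Set ℝ := {s : ℝ | 0 ≤ s ∧ ν s ≤ m} with hA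
  have h0A : (0 : ℝ) ∈ A := ⟨le_refl 0, hm⟩
  have hAne : A.Nonempty := ⟨0, h0A⟩
  -- A is bounded above
  have ha : 0 < ν 1 - ν 0 := by
    have := hmono (self_mem_Ici) (by norm_num : (1:ℝ) ∈ Ici (0:ℝ)) one_pos
    linarith
  have hbdd : BddAbove A := by
    refine ⟨max 1 (1 + (m - ν 1) / (ν 1 - ν 0)), fun s hs => ?_⟩
    rcases le_or_gt s 1 with h1 | h1
    · exact le_max_of_le_left h1
    · have hslope := hconv.slope_mono_adjacent (self_mem_Ici)
        (mem_Ici.2 hs.1) one_pos h1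
      simp only [sub_zero, div_one] at hslope
      have hνs : ν s ≤ m := hs.2
      have hs1 : 0 < s - 1 := by linarith
      have h2 : (ν 1 - ν 0) * (s - 1) ≤ ν s - ν 1 := by
        rw [le_div_iff₀ hs1] at hslope; linarith
      have : s - 1 ≤ (m - ν 1) / (ν 1 - ν 0) := by
        rw [le_div_iff₀ ha]; nlinarith
      refine le_max_of_le_right (by linarith)
  set T : ℝ := sSup A with hT
  have hT0 : 0 ≤ T := le_csSup hbdd h0A
  -- F1 : above T, ν exceeds m
  have F1 : ∀ u : ℝ, T < u → m < ν u := by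
    intro u hu
    by_contra hc
    push_neg at hc
    have : u ∈ A := ⟨le_trans hT0 hu.le, hc⟩
    exact absurd (le_csSup hbdd this) (not_le.2 hu)
  -- F2 : m ≤ ν T
  have F2 : m ≤ ν T := by
    by_contra hc
    push_neg at hc
    have hc1 : 0 < ν (T + 1) - ν T := by
      have := hmono (mem_Ici.2 hT0) (mem_Ici.2 (by linarith)) (by linarith : T < T + 1)
      linarith
    set h0 : ℝ := min 1 ((m - ν T) / (ν (T + 1) - ν T)) with hh0
    have hh0pos : 0 < h0 := lt_min one_pos (div_pos (by linarith) hc1)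
    have hh0le : h0 ≤ 1 := min_le_left _ _
    have hcomb := hconv.2 (mem_Ici.2 hT0) (mem_Ici.2 (by linarith : (0:ℝ) ≤ T + 1))
      (by linarith : (0:ℝ) ≤ 1 - h0) hh0pos.le (by ring)
    simp only [smul_eq_mul] at hcomb
    have hpt : (1 - h0) * T + h0 * (T + 1) = T + h0 := by ring
    rw [hpt] at hcomb
    have hle : ν (T + h0) ≤ m := by
      have h2 : h0 ≤ (m - ν T) / (ν (T + 1) - ν T) := min_le_right _ _
      have h3 : h0 * (ν (T + 1) - ν T) ≤ m - ν T := by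
        rw [div_eq_mul_inv] at h2
        calc h0 * (ν (T + 1) - ν T) ≤ (m - ν T) * (ν (T + 1) - ν T)⁻¹ * (ν (T + 1) - ν T) := by
              apply mul_le_mul_of_nonneg_right h2 hc1.le
          _ = m - ν T := by field_simp
      nlinarith
    have : T + h0 ∈ A := ⟨by linarith, hle⟩
    have := le_csSup hbdd this
    linarith
  apply le_antisymm
  · -- upper bound : iInf ≤ r * T
    apply ereal_le_coe_of_forall_eps
    intro ε hε
    rcases eq_or_lt_of_le hr with hr0 | hrpos
    · -- r = 0
      subst hr0
      set l : ℝ := (m - ν 0) / ε + 1 with hl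
      have hl0 : (0:ℝ) ≤ (m - ν 0) / ε := div_nonneg (by linarith) hε.le
      have hlpos : 0 < l := by rw [hl]; linarith
      have hleg : legendre ν (l * 0) + (m : EReal) ≤ ((m - ν 0 : ℝ) : EReal) := by
        have : legendre ν (l * 0) ≤ ((-ν 0 : ℝ) : EReal) := by
          refine iSup_le fun s => ?_
          rw [EReal.coe_le_coe_iff]
          have hs0 : (0:ℝ) ≤ (s : ℝ) := s.2
          have hν : ν 0 ≤ ν s := by
            rcases eq_or_lt_of_le hs0 with h | h
            · exact le_of_eq (congrArg ν h)
            · exact (hmono self_mem_Ici (mem_Ici.2 hs0) h).le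
          nlinarith
        calc legendre ν (l * 0) + (m : EReal) ≤ ((-ν 0 : ℝ) : EReal) + (m : EReal) :=
              add_le_add_left this _
          _ = ((m - ν 0 : ℝ) : EReal) := by
              rw [← EReal.coe_add]; exact EReal.coe_eq_coe_iff.2 (by ring)
      refine le_trans (iInf₂_le l hlpos) ?_
      calc (legendre ν (l * 0) + (m : EReal)) / ((l : ℝ) : EReal)
          ≤ ((m - ν 0 : ℝ) : EReal) / ((l : ℝ) : EReal) :=
            EReal.div_le_div_right_of_nonneg (by exact_mod_cast hlpos.le) hleg
        _ = (((m - ν 0) / l : ℝ) : EReal) := (EReal.coe_div _ _).symm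
        _ ≤ ((0 * T + ε : ℝ) : EReal) := by
            rw [EReal.coe_le_coe_iff, div_le_iff₀ hlpos]
            have hεl : ε * l = (m - ν 0) + ε := by
              rw [hl]; field_simp
            nlinarith
    · -- r > 0
      set δ : ℝ := ε / r with hδ
      have hδpos : 0 < δ := div_pos hε hrpos
      have hνδ : 0 < ν (T + δ) - ν T :=
        sub_pos.2 (hmono (mem_Ici.2 hT0) (mem_Ici.2 (by linarith)) (by linarith))
      set k : ℝ := (ν (T + δ) - ν T) / δ with hk
      have hkpos : 0 < k := div_pos hνδ hδpos
      have hkδ : k * δ = ν (T + δ) - ν T := by rw [hk]; exact div_mul_cancel₀ _ hδpos.ne'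
      set l : ℝ := k / r with hl
      have hlpos : 0 < l := div_pos hkpos hrpos
      have hlr : l * r = k := div_mul_cancel₀ k hrpos.ne'
      -- key pointwise claim
      have key : ∀ s : ℝ, 0 ≤ s → l * r * s - ν s ≤ l * r * (T + δ) - m := by
        intro s hs
        rw [hlr]
        rcases le_or_gt s T with hsT | hsT
        · rcases eq_or_lt_of_le hsT with heq | hlt
          · subst heq; nlinarith
          · have hslope := hconv.slope_mono_adjacent (mem_Ici.2 hs)
              (mem_Ici.2 (by linarith : (0:ℝ) ≤ T + δ)) hlt (by linarith)
            have h1 : (ν T - ν s) / (T - s) ≤ k := by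
              rw [show T + δ - T = δ by ring, ← hk] at hslope; exact hslope
            have h2 : ν T - ν s ≤ k * (T - s) := by
              rw [div_le_iff₀ (by linarith : (0:ℝ) < T - s)] at h1; linarith
            nlinarith
        · rcases le_or_gt s (T + δ) with hsδ | hsδ
          · have := F1 s hsT
            nlinarith
          · have hslope := hconv.slope_mono_adjacent (mem_Ici.2 hT0)
              (mem_Ici.2 (by linarith : (0:ℝ) ≤ s)) (by linarith : T < T + δ) hsδ
            have h1 : k ≤ (ν s - ν (T + δ)) / (s - (T + δ)) := by
              rw [show T + δ - T = δ by ring, ← hk] at hslope; exact hslope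
            have h2 : k * (s - (T + δ)) ≤ ν s - ν (T + δ) := by
              rw [le_div_iff₀ (by linarith : (0:ℝ) < s - (T + δ))] at h1; linarith
            nlinarith
      have hleg : legendre ν (l * r) + (m : EReal) ≤ ((l * r * (T + δ) : ℝ) : EReal) := by
        have h1 : legendre ν (l * r) ≤ ((l * r * (T + δ) - m : ℝ) : EReal) := by
          refine iSup_le fun s => ?_
          rw [EReal.coe_le_coe_iff]
          exact key s s.2
        calc legendre ν (l * r) + (m : EReal)
            ≤ ((l * r * (T + δ) - m : ℝ) : EReal) + (m : EReal) := add_le_add_left h1 _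
          _ = ((l * r * (T + δ) : ℝ) : EReal) := by rw [← EReal.coe_add]; norm_num
      refine le_trans (iInf₂_le l hlpos) ?_
      calc (legendre ν (l * r) + (m : EReal)) / ((l : ℝ) : EReal)
          ≤ ((l * r * (T + δ) : ℝ) : EReal) / ((l : ℝ) : EReal) :=
            EReal.div_le_div_right_of_nonneg (by exact_mod_cast hlpos.le) hleg
        _ = ((l * r * (T + δ) / l : ℝ) : EReal) := (EReal.coe_div _ _).symm
        _ = ((r * T + ε : ℝ) : EReal) := by
            have e1 : l * r * (T + δ) / l = r * (T + δ) := by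
              field_simp
            have e2 : r * (T + δ) = r * T + ε := by
              rw [hδ]; field_simp
            exact EReal.coe_eq_coe_iff.2 (by rw [e1, e2])
  · -- lower bound : r * T ≤ iInf
    refine le_iInf fun l => le_iInf fun hl => ?_
    rw [EReal.le_div_iff_mul_le (by exact_mod_cast hl) (EReal.coe_ne_top l)]
    rw [← EReal.coe_mul]
    apply coe_le_ereal_of_forall_eps
    intro ε hε
    rcases eq_or_lt_of_le (mul_nonneg (mul_nonneg hl.le hr) hT0 :
        (0:ℝ) ≤ l * r * T) with hz | hz
    · -- l * r * T = 0 : just use s = 0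
      have h1 : ((l * r * 0 - ν 0 : ℝ) : EReal) ≤ legendre ν (l * r) :=
        le_iSup (fun s : Ici (0:ℝ) => ((l * r * (s:ℝ) - ν s : ℝ) : EReal)) ⟨0, self_mem_Ici⟩
      calc ((r * T * l - ε : ℝ) : EReal) ≤ ((l * r * 0 - ν 0 + m : ℝ) : EReal) := by
            rw [EReal.coe_le_coe_iff]; nlinarith [hz]
        _ = ((l * r * 0 - ν 0 : ℝ) : EReal) + (m : EReal) := by rw [← EReal.coe_add]
        _ ≤ legendre ν (l * r) + (m : EReal) := add_le_add_left h1 _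
    · -- l * r > 0
      have hlrpos : 0 < l * r := by
        rcases eq_or_lt_of_le hr with h | h
        · exfalso; rw [← h] at hz; simp at hz
        · exact mul_pos hl h
      set δ : ℝ := ε / (l * r) with hδ
      have hδpos : 0 < δ := div_pos hε hlrpos
      obtain ⟨t, htA, htT⟩ := exists_lt_of_lt_csSup hAne (by linarith : T - δ < T)
      have h1 : ((l * r * t - ν t : ℝ) : EReal) ≤ legendre ν (l * r) :=
        le_iSup (fun s : Ici (0:ℝ) => ((l * r * (s:ℝ) - ν s : ℝ) : EReal)) ⟨t, htA.1⟩
      have h2 : r * T * l - ε ≤ l * r * t - ν t + m := by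
        have hνt : ν t ≤ m := htA.2
        have : l * r * (T - δ) ≤ l * r * t := by
          apply mul_le_mul_of_nonneg_left htT.le hlrpos.le
        have hlrδ : l * r * δ = ε := by rw [hδ]; field_simp; exact div_self (right_ne_zero_of_mul hlrpos.ne')
        nlinarith
      calc ((r * T * l - ε : ℝ) : EReal) ≤ ((l * r * t - ν t + m : ℝ) : EReal) := by
            rw [EReal.coe_le_coe_iff]; exact h2
        _ = ((l * r * t - ν t : ℝ) : EReal) + (m : EReal) := by rw [← EReal.coe_add]
        _ ≤ legendre ν (l * r) + (m : EReal) := add_le_add_left h1 _
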